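/- Equivalence of LSkG and LSkT, first direction: for any LSkG derivation of S | Γ ⊢ C, there exists an LSkT derivation of ⟦s(S) | Γ⟧ ⊢ C, where s maps an empty stoup to I and a formula stoup to itself, and ⟦T | Γ⟧ is the left-associated tree obtained by repeatedly pairing: ⟦T | []⟧ = T and ⟦T | B,Γ⟧ = ⟦(T,B) | Γ⟧. -/
import Mathlib


/-- Formulae of left skew monoidal closed logic: atoms, unit I, ⊗, ⊸. -/
inductive Fma : Type
  | atom : ℕ → Fma
  | I : Fma
  | tens : Fma → Fma → Fma
  | lolli : Fma → Fma → Fma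

/-- Derivability in the stoup sequent calculus LSkG: `GDer S Γ A` means `S | Γ ⊢ A`. -/
inductive GDer : Option Fma → List Fma → Fma → Prop
  | ax {A} : GDer (some A) [] A
  | lolliL {A B C Γ Δ} : GDer none Γ A → GDer (some B) Δ C →
      GDer (some (Fma.lolli A B)) (Γ ++ Δ) C
  | IL {Γ C} : GDer none Γ C → GDer (some Fma.I) Γ C
  | tensL {A B Γ C} : GDer (some A) (B :: Γ) C → GDer (some (Fma.tens A B)) Γ C
  | pass {A Γ C} : GDer (some A) Γ C → GDer none (A :: Γ) C
  | lolliR {S Γ A B} : GDer S (Γ ++ [A]) B → GDer S Γ (Fma.lolli A B)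
  | IR : GDer none [] Fma.I
  | tensR {S Γ Δ A B} : GDer S Γ A → GDer none Δ B → GDer S (Γ ++ Δ) (Fma.tens A B)

/-- Trees: formulae, the empty tree, and pairing. -/
inductive Tr : Type
  | fma : Fma → Tr
  | emp : Tr
  | pair : Tr → Tr → Tr

/-- Contexts: trees with a single hole. -/
inductive Ctx : Type
  | hole : Ctx
  | pairL : Ctx → Tr → Ctx
  | pairR : Tr → Ctx → Ctx

/-- Substitution of a tree into the hole of a context. -/
def plug : Ctx → Tr → Tr
  | Ctx.hole, U => U
  | Ctx.pairL C T, U => Tr.pair (plug C U) T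
  | Ctx.pairR T C, U => Tr.pair T (plug C U)

/-- Derivability in the tree sequent calculus LSkT: `TDer T A` means `T ⊢ A`. -/
inductive TDer : Tr → Fma → Prop
  | ax {A} : TDer (Tr.fma A) A
  | IL {T C} : TDer (plug T Tr.emp) C → TDer (plug T (Tr.fma Fma.I)) C
  | IR : TDer Tr.emp Fma.I
  | tensL {T A B C} : TDer (plug T (Tr.pair (Tr.fma A) (Tr.fma B))) C →
      TDer (plug T (Tr.fma (Fma.tens A B))) C
  | tensR {T U A B} : TDer T A → TDer U B → TDer (Tr.pair T U) (Fma.tens A B)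
  | lolliL {T U A B C} : TDer U A → TDer (plug T (Tr.fma B)) C →
      TDer (plug T (Tr.pair (Tr.fma (Fma.lolli A B)) U)) C
  | lolliR {T A B} : TDer (Tr.pair T (Tr.fma A)) B → TDer T (Fma.lolli A B)
  | assoc {T U₀ U₁ U₂ C} : TDer (plug T (Tr.pair U₀ (Tr.pair U₁ U₂))) C →
      TDer (plug T (Tr.pair (Tr.pair U₀ U₁) U₂)) C
  | unitL {T U C} : TDer (plug T U) C → TDer (plug T (Tr.pair Tr.emp U)) C
  | unitR {T U C} : TDer (plug T (Tr.pair U Tr.emp)) C → TDer (plug T U) C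

/-- `T*`: turn a tree into a formula, replacing commas with ⊗ and `-` with `I`. -/
def Tr.star : Tr → Fma
  | Tr.fma A => A
  | Tr.emp => Fma.I
  | Tr.pair T U => Fma.tens T.star U.star

/-- `s(S)`: map an empty stoup to `I` and a formula stoup to itself. -/
def stp : Option Fma → Fma
  | none => Fma.I
  | some A => A

/-- `⟦T | Γ⟧`: the left-associated tree obtained by repeatedly pairing. -/
def enc : Tr → List Fma → Tr
  | T, [] => T
  | T, B :: Γ => enc (Tr.pair T (Tr.fma B)) Γ

def comp : Ctx → Ctx → Ctx
  | Ctx.hole, D => D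
  | Ctx.pairL C T, D => Ctx.pairL (comp C D) T
  | Ctx.pairR T C, D => Ctx.pairR T (comp C D)

theorem plug_comp (C D : Ctx) (U : Tr) : plug (comp C D) U = plug C (plug D U) := by
  induction C <;> simp [comp, plug, *]

def ctxOf : List Fma → Ctx
  | [] => Ctx.hole
  | B :: Γ => comp (ctxOf Γ) (Ctx.pairL Ctx.hole (Tr.fma B))

theorem enc_eq_plug (Γ : List Fma) (T : Tr) : enc T Γ = plug (ctxOf Γ) T := by
  induction Γ generalizing T with
  | nil => rfl
  | cons B Γ ih => simp [enc, ctxOf, plug_comp, plug, ih]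

theorem enc_append (T : Tr) (Γ Δ : List Fma) : enc T (Γ ++ Δ) = enc (enc T Γ) Δ := by
  induction Γ generalizing T with
  | nil => rfl
  | cons B Γ ih => simp [enc, ih]

theorem lemA (Γ : List Fma) (Tc : Ctx) (T U : Tr) {C : Fma}
    (h : TDer (plug Tc (Tr.pair T (enc U Γ))) C) :
    TDer (plug Tc (enc (Tr.pair T U) Γ)) C := by
  induction Γ generalizing T U with
  | nil => exact h
  | cons B Γ ih =>
    have h' := ih T (Tr.pair U (Tr.fma B)) h
    show TDer (plug Tc (enc (Tr.pair (Tr.pair T U) (Tr.fma B)) Γ)) C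
    rw [enc_eq_plug, ← plug_comp] at h' ⊢
    exact TDer.assoc h'

theorem merge (Γ : List Fma) (Tc : Ctx) (T : Tr) {C : Fma}
    (h : TDer (plug Tc (Tr.pair T (enc Tr.emp Γ))) C) :
    TDer (plug Tc (enc T Γ)) C := by
  have h' := lemA Γ Tc T Tr.emp h
  rw [enc_eq_plug, ← plug_comp] at h' ⊢
  exact TDer.unitR h'

def trOf : Option Fma → Tr
  | none => Tr.emp
  | some A => Tr.fma A

theorem G2T' (S : Option Fma) (Γ : List Fma) (C : Fma) (f : GDer S Γ C) :
    TDer (enc (trOf S) Γ) C := by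
  induction f with
  | ax => exact TDer.ax
  | @lolliL A B C Γ Δ _ _ ih1 ih2 =>
    rw [enc_append, enc_eq_plug Δ]
    apply merge Γ (ctxOf Δ)
    rw [enc_eq_plug Δ] at ih2
    exact TDer.lolliL ih1 ih2
  | IL _ ih =>
    rw [enc_eq_plug] at ih ⊢
    exact TDer.IL ih
  | @tensL A B Γ C _ ih =>
    show TDer (enc (Tr.fma (Fma.tens A B)) Γ) C
    rw [enc_eq_plug]
    apply TDer.tensL
    rw [← enc_eq_plug]
    exact ih
  | pass _ ih =>
    show TDer (enc (Tr.pair Tr.emp (Tr.fma _)) _) _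
    rw [enc_eq_plug]
    apply TDer.unitL
    rw [← enc_eq_plug]
    exact ih
  | lolliR _ ih =>
    rw [enc_append] at ih
    exact TDer.lolliR ih
  | IR => exact TDer.IR
  | tensR _ _ ih1 ih2 =>
    rw [enc_append]
    exact merge _ Ctx.hole _ (TDer.tensR ih1 ih2)

/-- From LSkG to LSkT: `S | Γ ⊢ C` yields `⟦s(S) | Γ⟧ ⊢ C`. -/
theorem G2T (S : Option Fma) (Γ : List Fma) (C : Fma) (f : GDer S Γ C) :
    TDer (enc (Tr.fma (stp S)) Γ) C := by
  have h := G2T' S Γ C f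
  cases S with
  | none =>
    rw [enc_eq_plug] at h ⊢
    exact TDer.IL h
  | some A => exact h
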